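/- Let n ≥ 1, ω = exp(2πi/(n+1)) ∈ ℂ, D = diagonal(1, ω, …, ωⁿ), and let T be an (n+1)×(n+1) complex matrix satisfying T * D = ω • (D * T) and Tᵀ * T = 1 (T preserves the standard symmetric bilinear form). Then there exist a diagonal matrix Δ with all diagonal entries in {1, −1} and a sign ε ∈ {1, −1} such that T = Δ * S_ε * Δ⁻¹, where S_ε is the (n+1)×(n+1) matrix with (S_ε)_{k,k+1} = 1 for 0 ≤ k ≤ n−1, (S_ε)_{n,0} = ε, and all other entries 0. Moreover T^(n+1) = ε • 1. -/

import Mathlib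

open Matrix
open scoped Fin.NatCast

/-- An `η`-orthogonal intertwiner `T` (with `T * D = ω • (D * T)` and `Tᵀ * T = 1`)
is conjugate, by a diagonal matrix with `±1` entries, to the ε-corner cyclic shift `S_ε`
(ones on the superdiagonal, `ε` in the bottom-left corner), and `T^(n+1) = ε • 1`. -/
theorem intertwiner_normal_form
    (n : ℕ) (hn : 1 ≤ n) (ω : ℂ)
    (hω : ω = Complex.exp (2 * Real.pi * Complex.I / (n + 1)))
    (T : Matrix (Fin (n + 1)) (Fin (n + 1)) ℂ)
    (hTD : T * Matrix.diagonal (fun j : Fin (n + 1) => ω ^ (j : ℕ))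
        = ω • (Matrix.diagonal (fun j : Fin (n + 1) => ω ^ (j : ℕ)) * T))
    (hTT : Tᵀ * T = 1) :
    ∃ (δ : Fin (n + 1) → ℂ) (ε : ℂ),
      (∀ j, δ j = 1 ∨ δ j = -1) ∧ (ε = 1 ∨ ε = -1) ∧
      T = Matrix.diagonal δ *
            (Matrix.of fun k j : Fin (n + 1) =>
              if j = k + 1 then (if k = Fin.last n then ε else 1) else 0) *
            (Matrix.diagonal δ)⁻¹ ∧
      T ^ (n + 1) = ε • (1 : Matrix (Fin (n + 1)) (Fin (n + 1)) ℂ) := by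
  -- ω is a primitive (n+1)-th root of unity
  have hprim : IsPrimitiveRoot ω (n + 1) := by
    rw [hω]
    have := Complex.isPrimitiveRoot_exp (n + 1) (Nat.succ_ne_zero n)
    simpa using this
  have hω1 : ω ^ (n + 1) = 1 := hprim.pow_eq_one
  -- T vanishes off the (cyclic) superdiagonal
  have hentry : ∀ k j : Fin (n + 1), j ≠ k + 1 → T k j = 0 := by
    intro k j hne
    have h1 := congrFun (congrFun hTD k) j
    rw [Matrix.mul_diagonal, Matrix.smul_apply, Matrix.diagonal_mul] at h1
    by_contra hT0
    have h2 : ω ^ (j : ℕ) = ω ^ ((k : ℕ) + 1) := by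
      have h : T k j * ω ^ (j : ℕ) = T k j * ω ^ ((k : ℕ) + 1) := by
        rw [h1, smul_eq_mul]; ring
      exact mul_left_cancel₀ hT0 h
    have h3 : ω ^ ((k : ℕ) + 1) = ω ^ (((k + 1 : Fin (n + 1)) : ℕ)) := by
      rw [pow_eq_pow_mod ((k : ℕ) + 1) hω1]
      congr 1
      rw [Fin.val_add_one]
      split
      · next h => rw [h]; simp [Fin.val_last]
      · next h =>
        have hlt : (k : ℕ) + 1 < n + 1 := by
          have := Fin.val_lt_last h
          omega
        rw [Nat.mod_eq_of_lt hlt]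
    rw [h3] at h2
    have := hprim.pow_inj j.isLt (k + 1 : Fin (n + 1)).isLt h2
    exact hne (Fin.ext this)
  set t : Fin (n + 1) → ℂ := fun k => T k (k + 1) with ht
  have hTform : ∀ k j : Fin (n + 1), T k j = if j = k + 1 then t k else 0 := by
    intro k j
    split
    · next h => rw [h]
    · next h => exact hentry k j h
  -- each t k is ±1
  have ht2 : ∀ k, t k * t k = 1 := by
    intro k
    have h1 := congrFun (congrFun hTT (k + 1)) (k + 1)
    rw [Matrix.mul_apply, Matrix.one_apply_eq] at h1
    rw [Finset.sum_eq_single k] at h1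
    · simpa [Matrix.transpose_apply] using h1
    · intro m _ hm
      rw [Matrix.transpose_apply, hTform]
      have hmk : (k + 1 : Fin (n + 1)) ≠ m + 1 := by
        intro h; exact hm (add_right_cancel h).symm
      rw [if_neg hmk, zero_mul]
    · intro h; exact absurd (Finset.mem_univ k) h
  have htsign : ∀ k, t k = 1 ∨ t k = -1 := fun k => mul_self_eq_one_iff.mp (ht2 k)
  -- define δ and ε
  set δ : Fin (n + 1) → ℂ := fun j => ∏ i ∈ Finset.range (j : ℕ), t i with hδ
  set ε : ℂ := ∏ j : Fin (n + 1), t j with hε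
  have hδ2 : ∀ j, δ j * δ j = 1 := by
    intro j
    rw [hδ]
    simp only [← Finset.prod_mul_distrib]
    exact Finset.prod_eq_one fun i _ => ht2 _
  have hε2 : ε * ε = 1 := by
    rw [hε, ← Finset.prod_mul_distrib]
    exact Finset.prod_eq_one fun i _ => ht2 _
  have hδsign : ∀ j, δ j = 1 ∨ δ j = -1 := fun j => mul_self_eq_one_iff.mp (hδ2 j)
  have hεsign : ε = 1 ∨ ε = -1 := mul_self_eq_one_iff.mp hε2
  -- inverse of diagonal δ is itself
  have hΔ1 : Matrix.diagonal δ * Matrix.diagonal δ = 1 := by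
    rw [Matrix.diagonal_mul_diagonal]
    rw [show (fun i => δ i * δ i) = fun _ => (1 : ℂ) from funext fun i => hδ2 i]
    exact Matrix.diagonal_one
  have hΔinv : (Matrix.diagonal δ)⁻¹ = Matrix.diagonal δ := Matrix.inv_eq_right_inv hΔ1
  -- recurrence for δ
  have hδsucc : ∀ k : Fin (n + 1), k ≠ Fin.last n → δ (k + 1) = δ k * t k := by
    intro k hk
    rw [hδ]
    simp only
    rw [Fin.val_add_one, if_neg hk, Finset.prod_range_succ, Fin.cast_val_eq_self]
  have hεrange : ε = ∏ i ∈ Finset.range (n + 1), t (i : Fin (n + 1)) := by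
    rw [hε, ← Fin.prod_univ_eq_prod_range (fun m => t (m : Fin (n + 1))) (n + 1)]
    simp [Fin.cast_val_eq_self]
  have hδlast : δ (Fin.last n) * t (Fin.last n) = ε := by
    rw [hεrange, Finset.prod_range_succ, hδ]
    simp only [Fin.val_last]
    rw [Fin.natCast_eq_last]
  have hδ0 : δ 0 = 1 := by rw [hδ]; simp
  refine ⟨δ, ε, hδsign, hεsign, ?_, ?_⟩
  · -- normal form
    rw [hΔinv]
    ext k j
    rw [Matrix.mul_diagonal, Matrix.diagonal_mul, Matrix.of_apply, hTform]
    by_cases hj : j = k + 1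
    · subst hj
      rw [if_pos rfl, if_pos rfl]
      by_cases hk : k = Fin.last n
      · subst hk
        rw [if_pos rfl, Fin.last_add_one, hδ0, mul_one, ← hδlast, ← mul_assoc,
          hδ2 (Fin.last n), one_mul]
      · rw [if_neg hk, hδsucc k hk, mul_one, ← mul_assoc, hδ2 k, one_mul]
    · rw [if_neg hj, if_neg hj, mul_zero, zero_mul]
  · -- the power formula
    have hpow : ∀ m : ℕ, T ^ m = Matrix.of fun i j : Fin (n + 1) =>
        if j = i + (m : Fin (n + 1)) then
          ∏ l ∈ Finset.range m, t (i + (l : Fin (n + 1))) else 0 := by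
      intro m
      induction m with
      | zero =>
        ext i j
        simp [Matrix.one_apply, eq_comm]
      | succ m ih =>
        rw [pow_succ, ih]
        ext i j
        rw [Matrix.mul_apply, Finset.sum_eq_single (i + (m : Fin (n + 1)))]
        · rw [Matrix.of_apply, if_pos rfl, hTform, Matrix.of_apply,
            Finset.prod_range_succ]
          have hc : ((m + 1 : ℕ) : Fin (n + 1)) = (m : Fin (n + 1)) + 1 := by
            push_cast; ring
          rw [hc, ← add_assoc, mul_ite, mul_zero]
        · intro c _ hc
          rw [Matrix.of_apply, if_neg hc, zero_mul]
        · intro h; exact absurd (Finset.mem_univ _) h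
    rw [hpow (n + 1)]
    ext i j
    rw [Matrix.of_apply, Matrix.smul_apply, Matrix.one_apply]
    have h0 : ((n + 1 : ℕ) : Fin (n + 1)) = 0 := Fin.natCast_self (n + 1)
    rw [h0, add_zero]
    have hp : ∏ l ∈ Finset.range (n + 1), t (i + (l : Fin (n + 1))) = ε := by
      rw [← Fin.prod_univ_eq_prod_range (fun l => t (i + (l : Fin (n + 1)))) (n + 1)]
      simp only [Fin.cast_val_eq_self]
      rw [hε]
      simpa using Equiv.prod_comp (Equiv.addLeft i) t
    rw [hp]
    by_cases h : j = i
    · rw [if_pos h, if_pos h.symm, smul_eq_mul, mul_one]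
    · rw [if_neg h, if_neg (Ne.symm h), smul_eq_mul, mul_zero]
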